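/- Let x₀ > 0 and y₀ > 0 with x₀ ≠ y₀. Then for every T > 0 there exists a pair of continuously differentiable functions (x,y) : [0,T] → ℝ² such that x(0) = x₀, y(0) = y₀, and for all t ∈ [0,T]: ẋ(t) = x(t) − max_{s∈[0,t]} y(s) and ẏ(t) = y(t) − max_{s∈[0,t]} x(s). -/

import Mathlib

lemma csSup_image_Icc_eq {f : ℝ → ℝ} {t : ℝ} (ht : 0 ≤ t) (c : ℝ)
    (hc : c ∈ f '' Set.Icc 0 t) (h : ∀ s ∈ Set.Icc 0 t, f s ≤ c) :
    sSup (f '' Set.Icc 0 t) = c := by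
  apply IsGreatest.csSup_eq
  exact ⟨hc, by rintro _ ⟨s, hs, rfl⟩; exact h s hs⟩

lemma key (x₀ y₀ T : ℝ) (h : y₀ < x₀) (hT : 0 < T) :
    ∃ x y : ℝ → ℝ, x 0 = x₀ ∧ y 0 = y₀ ∧
      ∀ t ∈ Set.Icc (0:ℝ) T,
        HasDerivWithinAt x (x t - sSup (y '' Set.Icc 0 t)) (Set.Icc 0 T) t ∧
        HasDerivWithinAt y (y t - sSup (x '' Set.Icc 0 t)) (Set.Icc 0 T) t := by
  set a : ℝ := x₀ - y₀ with ha
  have hapos : 0 < a := by simp [ha]; linarith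
  refine ⟨fun t => y₀ + a * Real.exp t, fun t => y₀ - a * (t * Real.exp t), by simp [ha], by simp, ?_⟩
  intro t ht
  obtain ⟨ht0, htT⟩ := ht
  have hsupy : sSup ((fun s => y₀ - a * (s * Real.exp s)) '' Set.Icc 0 t) = y₀ := by
    apply csSup_image_Icc_eq ht0
    · exact ⟨0, ⟨le_refl 0, ht0⟩, by simp⟩
    · intro s hs
      have : 0 ≤ a * (s * Real.exp s) :=
        mul_nonneg hapos.le (mul_nonneg hs.1 (Real.exp_pos s).le)
      linarith
  have hsupx : sSup ((fun s => y₀ + a * Real.exp s) '' Set.Icc 0 t)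
      = y₀ + a * Real.exp t := by
    apply csSup_image_Icc_eq ht0
    · exact ⟨t, ⟨ht0, le_refl t⟩, rfl⟩
    · intro s hs
      have := Real.exp_le_exp.mpr hs.2
      nlinarith
  constructor
  · rw [hsupy]
    have hx : HasDerivAt (fun t => y₀ + a * Real.exp t) (a * Real.exp t) t :=
      ((Real.hasDerivAt_exp t).const_mul a).const_add y₀
    have : (y₀ + a * Real.exp t) - y₀ = a * Real.exp t := by ring
    rw [this]
    exact hx.hasDerivWithinAt
  · rw [hsupx]
    have hmul : HasDerivAt (fun s : ℝ => s * Real.exp s)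
        (1 * Real.exp t + t * Real.exp t) t :=
      (hasDerivAt_id t).mul (Real.hasDerivAt_exp t)
    have hy : HasDerivAt (fun s => y₀ - a * (s * Real.exp s))
        (-(a * (1 * Real.exp t + t * Real.exp t))) t := by
      rw [show (fun s => y₀ - a * (s * Real.exp s)) = fun s => y₀ + -(a * (s * Real.exp s)) from by funext s; ring]
      exact ((hmul.const_mul a).neg.const_add y₀)
    have : (y₀ - a * (t * Real.exp t)) - (y₀ + a * Real.exp t)
        = -(a * (1 * Real.exp t + t * Real.exp t)) := by ring
    rw [this]
    exact hy.hasDerivWithinAt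

/-- Global existence on `[0,T]` for the coupled system with maxima
`ẋ = x − max_{[0,t]} y`, `ẏ = y − max_{[0,t]} x`, with `x₀, y₀ > 0` and `x₀ ≠ y₀`. -/
theorem exists_solution_coupled_system_with_maxima (x₀ y₀ : ℝ)
    (hx₀ : 0 < x₀) (hy₀ : 0 < y₀) (hne : x₀ ≠ y₀) (T : ℝ) (hT : 0 < T) :
    ∃ x y : ℝ → ℝ, x 0 = x₀ ∧ y 0 = y₀ ∧
      ∀ t ∈ Set.Icc (0:ℝ) T,
        HasDerivWithinAt x (x t - sSup (y '' Set.Icc 0 t)) (Set.Icc 0 T) t ∧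
        HasDerivWithinAt y (y t - sSup (x '' Set.Icc 0 t)) (Set.Icc 0 T) t := by
  rcases hne.lt_or_gt with h | h
  · obtain ⟨x, y, h1, h2, h3⟩ := key y₀ x₀ T h hT
    exact ⟨y, x, h2, h1, fun t ht => ⟨(h3 t ht).2, (h3 t ht).1⟩⟩
  · exact key x₀ y₀ T h hT
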